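/- For every b ∈ ℂ with b ≠ 0 there exists ε > 0 such that for every λ ∈ ℂ with 0 < |λ| < ε, the loops Γ₁, Γ₂ : 𝕊¹ → ℂ × (ℂ \ {0, −1/λ}) given by Γ₁(θ) = (1 + e^{iθ}, e^{iθ}(e^{iθ} + 2)) and Γ₂(θ) = (−1 + e^{iθ}, e^{iθ}(e^{iθ} − 2)) are well defined (their second components avoid 0 and −1/λ) and freely homotopic in ℂ × (ℂ \ {0, −1/λ}). -/

import Mathlib

lemma key_aux (l : ℂ) (h3 : 3 < ‖-1 / l‖) (z : ℂ) (hz : ‖z‖ = 1) :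
    z * (z + 2) ≠ 0 ∧ z * (z + 2) ≠ -1 / l := by
  constructor
  · intro h
    rcases mul_eq_zero.1 h with h | h
    · simp [h] at hz
    · have : z = -2 := by linear_combination h
      rw [this] at hz; simp at hz
  · intro h
    have hle : ‖z * (z + 2)‖ ≤ 3 := by
      rw [norm_mul, hz, one_mul]
      calc ‖z + 2‖ ≤ ‖z‖ + ‖(2:ℂ)‖ := norm_add_le _ _
        _ = 3 := by rw [hz]; norm_num
    rw [h] at hle
    linarith

lemma abs_rot (t : ℝ) (w : Circle) :
    ‖Complex.exp (Real.pi * Complex.I * t) * (w : ℂ)‖ = 1 := by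
  rw [norm_mul, Complex.norm_exp]
  simp [Complex.mul_re, Complex.mul_im, Circle.norm_coe]

/-- For every `b ≠ 0` there is `ε > 0` such that for every `λ` with
`0 < |λ| < ε`, the loops `Γ₁(θ) = (1 + e^{iθ}, e^{iθ}(e^{iθ} + 2))` and
`Γ₂(θ) = (−1 + e^{iθ}, e^{iθ}(e^{iθ} − 2))` take values in `ℂ × (ℂ \ {0, −1/λ})`
and are freely homotopic there (i.e. there is a homotopy whose second component
avoids `0` and `−1/λ`). -/
theorem stmt_18 (b : ℂ) (hb : b ≠ 0)
    (Γ₁ Γ₂ : C(Circle, ℂ × ℂ))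
    (hΓ₁ : ∀ w : Circle, Γ₁ w = (1 + (w : ℂ), (w : ℂ) * ((w : ℂ) + 2)))
    (hΓ₂ : ∀ w : Circle, Γ₂ w = (-1 + (w : ℂ), (w : ℂ) * ((w : ℂ) - 2))) :
    ∃ ε : ℝ, 0 < ε ∧ ∀ l : ℂ, 0 < ‖l‖ → ‖l‖ < ε →
      (∀ w : Circle, (Γ₁ w).2 ≠ 0 ∧ (Γ₁ w).2 ≠ -1 / l) ∧
      (∀ w : Circle, (Γ₂ w).2 ≠ 0 ∧ (Γ₂ w).2 ≠ -1 / l) ∧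
      ∃ H : ContinuousMap.Homotopy Γ₁ Γ₂,
        ∀ p : unitInterval × Circle, (H p).2 ≠ 0 ∧ (H p).2 ≠ -1 / l := by
  refine ⟨1/4, by norm_num, fun l hl hl4 => ?_⟩
  have h3 : 3 < ‖-1 / l‖ := by
    rw [norm_div, norm_neg, norm_one, lt_div_iff₀ hl]
    nlinarith
  refine ⟨fun w => by rw [hΓ₁ w]; exact key_aux l h3 _ (Circle.norm_coe w),
          fun w => by
            rw [hΓ₂ w]
            have := key_aux l h3 (-(w : ℂ)) (by rw [norm_neg, Circle.norm_coe])
            have e : (-(w:ℂ)) * (-(w:ℂ) + 2) = (w:ℂ) * ((w:ℂ) - 2) := by ring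
            rw [e] at this; exact this, ?_⟩
  refine ⟨⟨⟨fun p => ((((1 - 2 * (p.1 : ℝ)) : ℝ) : ℂ) + (p.2 : ℂ),
      (Complex.exp (Real.pi * Complex.I * (p.1 : ℝ)) * (p.2 : ℂ)) *
      (Complex.exp (Real.pi * Complex.I * (p.1 : ℝ)) * (p.2 : ℂ) + 2)), by fun_prop⟩,
      fun w => by simp [hΓ₁ w], fun w => by
        simp only [ContinuousMap.coe_mk, hΓ₂ w]
        norm_num [Complex.exp_pi_mul_I]
        ring⟩, fun p => ?_⟩
  exact key_aux l h3 _ (abs_rot _ _)
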